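/- Let $m>0$ and let $U:[0,\infty)\to[0,\infty)$ be nondecreasing and right-continuous with $0\le U(t)-m^{-1}t\le a_0^{*}$ for all $t\ge0$ and some constant $a_0^{*}>0$. Let $f:[0,\infty)\to[0,\infty)$ be nondecreasing and right-continuous with $f(0)=0$ and $\beta_0+\beta_1 x^{q-r_2}\le f(x)-c_0 x^{q}\le \alpha_0+\alpha_1 x^{q-r_1}$ for all $x>0$, where $c_0,q,\alpha_0,\alpha_1>0$, $0<r_1,r_2\le q$ and $\beta_0,\beta_1<0$. Define $V(t):=\int_{[0,t]}f(t-y)\,\mathrm{d}U(y)$. Then there exist constants $a_0,a_1>0$ and $b_0,b_1\le 0$ such that for all $t>0$: $b_0+b_1 t^{\,q-\min(r_2-1,0)}\ \le\ V(t)-c_0\,(m(q+1))^{-1}\,t^{q+1}\ \le\ a_0+a_1 t^{\,q-\min(r_1-1,0)}$. -/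

import Mathlib

open MeasureTheory Set

noncomputable section

set_option maxHeartbeats 1000000

open Filter Function in

lemma pow_le_aux (C e P u : ℝ) (hC : 0 ≤ C) (he : 0 ≤ e) (heP : e ≤ P) (hu : 0 < u) :
    C * u ^ e ≤ C + C * u ^ P := by
  rcases le_total u 1 with h | h
  · have h1 : u ^ e ≤ 1 := Real.rpow_le_one hu.le h he
    have h2 : 0 ≤ u ^ P := Real.rpow_nonneg hu.le P
    nlinarith
  · have h1 : u ^ e ≤ u ^ P := Real.rpow_le_rpow_of_exponent_le h heP
    nlinarith [Real.rpow_nonneg hu.le e]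

lemma pow_ge_aux (C e P u : ℝ) (hC : C ≤ 0) (he : 0 ≤ e) (heP : e ≤ P) (hu : 0 < u) :
    C + C * u ^ P ≤ C * u ^ e := by
  have := pow_le_aux (-C) e P u (by linarith) he heP hu
  nlinarith

open Filter Function in
lemma leftLim_U_zero (U : StieltjesFunction ℝ) (hU0 : ∀ t < 0, U t = 0) : leftLim U 0 = 0 := by
  apply leftLim_eq_of_tendsto
  apply Filter.Tendsto.congr' ?_ tendsto_const_nhds
  filter_upwards [self_mem_nhdsWithin] with x hx
  exact (hU0 x hx).symm

open Filter Function in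
lemma leftLim_U_nonpos (U : StieltjesFunction ℝ) (hU0 : ∀ t < 0, U t = 0) (b : ℝ) (hb : b ≤ 0) :
    leftLim U b = 0 := by
  have h1 : leftLim U b ≤ leftLim U 0 := U.mono.leftLim hb
  rw [leftLim_U_zero U hU0] at h1
  have h2 : (0:ℝ) ≤ leftLim U b := by
    have := U.mono.le_leftLim (show b - 1 < b by linarith)
    rwa [hU0 (b-1) (by linarith)] at this
  linarith

open Filter Function in
lemma leftLim_U_lb (m : ℝ) (U : StieltjesFunction ℝ) (h : ∀ x, m⁻¹ * x ≤ U x) (b : ℝ) :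
    m⁻¹ * b ≤ leftLim U b := by
  have h1 : Tendsto U (nhdsWithin b (Iio b)) (nhds (leftLim U b)) := U.mono.tendsto_leftLim b
  have h2 : Tendsto (fun x : ℝ => m⁻¹ * x) (nhdsWithin b (Iio b)) (nhds (m⁻¹ * b)) :=
    ((continuous_const.mul continuous_id).tendsto b).mono_left nhdsWithin_le_nhds
  exact le_of_tendsto_of_tendsto h2 h1 (Eventually.of_forall fun x => h x)

open Filter Function in
lemma integrable_pow_kernel (U : StieltjesFunction ℝ) (p t : ℝ) (hp : 0 ≤ p) (ht : 0 < t) :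
    Integrable (fun y => (t - y) ^ p) (U.measure.restrict (Icc (0:ℝ) t)) := by
  have : IsFiniteMeasure (U.measure.restrict (Icc (0:ℝ) t)) := by
    constructor
    rw [Measure.restrict_apply_univ, U.measure_Icc]
    exact ENNReal.ofReal_lt_top
  have hmeasf : Measurable fun y : ℝ => (t - y) ^ p :=
    ((Real.continuous_rpow_const hp).comp (continuous_const.sub continuous_id)).measurable
  have hae : ∀ᵐ y ∂(U.measure.restrict (Icc (0:ℝ) t)), y ∈ Icc (0:ℝ) t :=
    ae_restrict_mem measurableSet_Icc
  apply (integrable_const (t ^ p)).mono' hmeasf.aestronglyMeasurable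
  filter_upwards [hae] with y hy
  rw [Real.norm_eq_abs, abs_of_nonneg (Real.rpow_nonneg (by linarith [hy.2]) p)]
  exact Real.rpow_le_rpow (by linarith [hy.2]) (by linarith [hy.1]) hp

open Filter Function in
lemma core_bounds (m a0star : ℝ) (hm : 0 < m) (ha0star : 0 < a0star)
    (U : StieltjesFunction ℝ) (hU0 : ∀ t < 0, U t = 0)
    (hUbound : ∀ t, 0 ≤ t → 0 ≤ U t - m⁻¹ * t ∧ U t - m⁻¹ * t ≤ a0star)
    (p t : ℝ) (hp : 0 ≤ p) (ht : 0 < t) :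
    m⁻¹ * (t ^ (p+1) / (p+1)) ≤ (∫ y in Icc (0:ℝ) t, (t - y) ^ p ∂U.measure) ∧
    (∫ y in Icc (0:ℝ) t, (t - y) ^ p ∂U.measure) ≤ m⁻¹ * (t ^ (p+1) / (p+1)) + a0star * t ^ p := by
  have hUlb : ∀ x : ℝ, m⁻¹ * x ≤ U x := by
    intro x
    rcases lt_or_ge x 0 with hx | hx
    · rw [hU0 x hx]
      exact mul_nonpos_of_nonneg_of_nonpos (inv_nonneg.2 hm.le) hx.le
    · linarith [(hUbound x hx).1]
  have hUub : ∀ x : ℝ, 0 ≤ x → U x ≤ m⁻¹ * x + a0star := fun x hx => by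
    linarith [(hUbound x hx).2]
  rcases eq_or_lt_of_le hp with hp0 | hp0
  · -- p = 0
    subst hp0
    simp only [Real.rpow_zero, zero_add, Real.rpow_one]
    rw [setIntegral_const, measureReal_def, U.measure_Icc, leftLim_U_zero U hU0, sub_zero,
      ENNReal.toReal_ofReal (le_trans (by positivity) (hUlb t)), smul_eq_mul, mul_one]
    constructor
    · have := hUlb t; linarith [this]
    · have := hUub t ht.le; linarith [this]
  · -- p > 0
    set μ' := U.measure.restrict (Icc (0:ℝ) t) with hμ'
    have hfinμ' : IsFiniteMeasure μ' := by
      constructor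
      rw [hμ', Measure.restrict_apply_univ, U.measure_Icc]
      exact ENNReal.ofReal_lt_top
    have hmeasf : Measurable fun y : ℝ => (t - y) ^ p :=
      ((Real.continuous_rpow_const hp).comp (continuous_const.sub continuous_id)).measurable
    have hae : ∀ᵐ y ∂μ', y ∈ Icc (0:ℝ) t := ae_restrict_mem measurableSet_Icc
    have f_nn : 0 ≤ᵐ[μ'] fun y => (t - y) ^ p := by
      filter_upwards [hae] with y hy
      exact Real.rpow_nonneg (by linarith [hy.2]) p
    have hfint : Integrable (fun y => (t - y) ^ p) μ' := integrable_pow_kernel U p t hp ht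
    set I := ∫ y in Icc (0:ℝ) t, (t - y) ^ p ∂U.measure with hIdef
    have hInonneg : 0 ≤ I := setIntegral_nonneg_ae measurableSet_Icc (by
      filter_upwards with y hy
      exact Real.rpow_nonneg (by linarith [hy.2]) p)
    set T := t ^ p with hTdef
    have hT : 0 < T := Real.rpow_pos_of_pos ht p
    -- set computation
    have hsetmeas : ∀ s : ℝ, MeasurableSet {y : ℝ | s < (t - y) ^ p} :=
      fun s => measurableSet_lt measurable_const hmeasf
    have hset1 : ∀ s ∈ Ioi (0:ℝ), {y : ℝ | s < (t - y) ^ p} ∩ Icc 0 t = Ico 0 (t - s ^ p⁻¹) := by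
      intro s hs
      have hs0 : (0:ℝ) < s := hs
      ext y
      simp only [mem_inter_iff, mem_setOf_eq, mem_Icc, mem_Ico]
      constructor
      · rintro ⟨h1, h2, h3⟩
        refine ⟨h2, ?_⟩
        have hty : (0:ℝ) ≤ t - y := by linarith
        have := (Real.rpow_inv_lt_iff_of_pos hs0.le hty hp0).2 h1
        linarith
      · rintro ⟨h1, h2⟩
        have hs' : 0 < s ^ p⁻¹ := Real.rpow_pos_of_pos hs0 _
        have hyt : y ≤ t := by linarith
        have hty : (0:ℝ) ≤ t - y := by linarith
        exact ⟨(Real.rpow_inv_lt_iff_of_pos hs0.le hty hp0).1 (by linarith), h1, hyt⟩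
    have hmuset : ∀ s ∈ Ioi (0:ℝ),
        μ' {y : ℝ | s < (t - y) ^ p} = ENNReal.ofReal (leftLim U (t - s ^ p⁻¹)) := by
      intro s hs
      rw [hμ', Measure.restrict_apply (hsetmeas s), hset1 s hs, U.measure_Ico,
        leftLim_U_zero U hU0, sub_zero]
    have hkey : ENNReal.ofReal I
        = ∫⁻ s in Ioi (0:ℝ), ENNReal.ofReal (leftLim U (t - s ^ p⁻¹)) := by
      rw [hIdef, ofReal_integral_eq_lintegral_ofReal hfint f_nn,
        lintegral_eq_lintegral_meas_lt μ' f_nn hmeasf.aemeasurable]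
      exact setLIntegral_congr_fun measurableSet_Ioi hmuset
    have hmeasLL : Measurable fun s : ℝ => ENNReal.ofReal (leftLim U (t - s ^ p⁻¹)) := by
      exact (U.mono.leftLim.measurable.comp
        ((continuous_const.sub (Real.continuous_rpow_const (by positivity))).measurable)).ennreal_ofReal
    -- integral computations on Ioc 0 T
    have hcontg : Continuous fun s : ℝ => m⁻¹ * (t - s ^ p⁻¹) :=
      continuous_const.mul (continuous_const.sub (Real.continuous_rpow_const (by positivity)))
    have hintg : IntegrableOn (fun s : ℝ => m⁻¹ * (t - s ^ p⁻¹)) (Ioc 0 T) :=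
      hcontg.integrableOn_Ioc
    have hgval : (∫ s in Ioc (0:ℝ) T, m⁻¹ * (t - s ^ p⁻¹)) = m⁻¹ * (t ^ (p+1) / (p+1)) := by
      rw [← intervalIntegral.integral_of_le hT.le]
      rw [intervalIntegral.integral_const_mul]
      rw [intervalIntegral.integral_sub intervalIntegrable_const
        (intervalIntegral.intervalIntegrable_rpow' (by linarith [inv_pos.2 hp0]))]
      rw [intervalIntegral.integral_const, integral_rpow (Or.inl (by linarith [inv_pos.2 hp0])),
        Real.zero_rpow (by positivity), smul_eq_mul]
      simp only [sub_zero]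
      have h1 : T ^ (p⁻¹ + 1) = t ^ (1 + p) := by
        rw [hTdef, ← Real.rpow_mul ht.le]
        congr 1
        field_simp
      have h2 : T * t = t ^ (p + 1) := by
        rw [hTdef, ← Real.rpow_add_one ht.ne']
      have h3 : t ^ (1 + p) = t ^ (p + 1) := by rw [add_comm]
      rw [h1, h2, h3]
      congr 1
      have hp1 : p + 1 ≠ 0 := by positivity
      have hpinv1 : p⁻¹ + 1 ≠ 0 := by positivity
      field_simp
      ring
    -- nonneg on Ioc 0 T
    have hgnn : ∀ s ∈ Ioc (0:ℝ) T, 0 ≤ m⁻¹ * (t - s ^ p⁻¹) := by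
      intro s hs
      have h1 : s ^ p⁻¹ ≤ T ^ p⁻¹ := Real.rpow_le_rpow hs.1.le hs.2 (by positivity)
      have h2 : T ^ p⁻¹ = t := by
        rw [hTdef, ← Real.rpow_mul ht.le, mul_inv_cancel₀ hp0.ne', Real.rpow_one]
      have : 0 ≤ t - s ^ p⁻¹ := by rw [h2] at h1; linarith
      positivity
    -- lower bound
    have hlow : m⁻¹ * (t ^ (p+1) / (p+1)) ≤ I := by
      rw [← ENNReal.ofReal_le_ofReal_iff hInonneg, hkey]
      calc ENNReal.ofReal (m⁻¹ * (t ^ (p+1) / (p+1)))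
          = ∫⁻ s in Ioc (0:ℝ) T, ENNReal.ofReal (m⁻¹ * (t - s ^ p⁻¹)) := by
            rw [← ofReal_integral_eq_lintegral_ofReal hintg
              ((ae_restrict_mem measurableSet_Ioc).mono fun s hs => hgnn s hs), hgval]
        _ ≤ ∫⁻ s in Ioc (0:ℝ) T, ENNReal.ofReal (leftLim U (t - s ^ p⁻¹)) := by
            apply setLIntegral_mono hmeasLL
            intro s hs
            exact ENNReal.ofReal_le_ofReal (leftLim_U_lb m U hUlb _)
        _ ≤ ∫⁻ s in Ioi (0:ℝ), ENNReal.ofReal (leftLim U (t - s ^ p⁻¹)) :=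
            lintegral_mono_set Ioc_subset_Ioi_self
    -- upper bound
    have hup : I ≤ m⁻¹ * (t ^ (p+1) / (p+1)) + a0star * T := by
      have hrhsnn : 0 ≤ m⁻¹ * (t ^ (p+1) / (p+1)) + a0star * T := by positivity
      rw [← ENNReal.ofReal_le_ofReal_iff hrhsnn, hkey]
      have hsplit : (Ioi (0:ℝ)) = Ioc 0 T ∪ Ioi T := (Ioc_union_Ioi_eq_Ioi hT.le).symm
      rw [hsplit, lintegral_union measurableSet_Ioi Ioc_disjoint_Ioi_same]
      have hzero : ∫⁻ s in Ioi T, ENNReal.ofReal (leftLim U (t - s ^ p⁻¹)) = 0 := by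
        rw [setLIntegral_congr_fun measurableSet_Ioi ?_, lintegral_zero]
        intro s hs
        have h2 : T ^ p⁻¹ = t := by
          rw [hTdef, ← Real.rpow_mul ht.le, mul_inv_cancel₀ hp0.ne', Real.rpow_one]
        have h1 : t ≤ s ^ p⁻¹ := by
          rw [← h2]
          exact Real.rpow_le_rpow hT.le (le_of_lt hs) (by positivity)
        beta_reduce
        rw [leftLim_U_nonpos U hU0 _ (by linarith), ENNReal.ofReal_zero]
      rw [hzero, add_zero]
      have hintg2 : IntegrableOn (fun s : ℝ => m⁻¹ * (t - s ^ p⁻¹) + a0star) (Ioc 0 T) :=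
        hintg.add (integrableOn_const measure_Ioc_lt_top.ne)
      calc ∫⁻ s in Ioc (0:ℝ) T, ENNReal.ofReal (leftLim U (t - s ^ p⁻¹))
          ≤ ∫⁻ s in Ioc (0:ℝ) T, ENNReal.ofReal (m⁻¹ * (t - s ^ p⁻¹) + a0star) := by
            apply setLIntegral_mono
              (((hcontg.add continuous_const).measurable).ennreal_ofReal)
            intro s hs
            apply ENNReal.ofReal_le_ofReal
            have hb0 : 0 ≤ t - s ^ p⁻¹ := by
              have := hgnn s hs
              nlinarith [inv_pos.2 hm]
            calc leftLim U (t - s ^ p⁻¹) ≤ U (t - s ^ p⁻¹) := U.mono.leftLim_le le_rfl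
              _ ≤ m⁻¹ * (t - s ^ p⁻¹) + a0star := hUub _ hb0
        _ = ENNReal.ofReal (m⁻¹ * (t ^ (p+1) / (p+1)) + a0star * T) := by
            rw [← ofReal_integral_eq_lintegral_ofReal hintg2
              ((ae_restrict_mem measurableSet_Ioc).mono fun s hs => by
                have := hgnn s hs
                simp only [Pi.zero_apply]
                linarith)]
            rw [integral_add hintg (integrableOn_const measure_Ioc_lt_top.ne), hgval,
              setIntegral_const, smul_eq_mul, measureReal_def, Real.volume_Ioc, sub_zero,
              ENNReal.toReal_ofReal hT.le]
            congr 1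
            ring
    exact ⟨hlow, hup⟩

theorem renewal_convolution_power_bounds
    (m a0star : ℝ) (hm : 0 < m) (ha0star : 0 < a0star)
    (U : StieltjesFunction ℝ) (hU0 : ∀ t < 0, U t = 0)
    (hUbound : ∀ t, 0 ≤ t → 0 ≤ U t - m⁻¹ * t ∧ U t - m⁻¹ * t ≤ a0star)
    (f : ℝ → ℝ) (hfmono : MonotoneOn f (Set.Ici 0))
    (hfrc : ∀ x, 0 ≤ x → ContinuousWithinAt f (Set.Ici x) x)
    (hfnonneg : ∀ x, 0 ≤ x → 0 ≤ f x) (hf0 : f 0 = 0)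
    (c0 q α0 α1 r1 r2 β0 β1 : ℝ)
    (hc0 : 0 < c0) (hq : 0 < q) (hα0 : 0 < α0) (hα1 : 0 < α1)
    (hr1 : 0 < r1) (hr1' : r1 ≤ q) (hr2 : 0 < r2) (hr2' : r2 ≤ q)
    (hβ0 : β0 < 0) (hβ1 : β1 < 0)
    (hflow : ∀ x, 0 < x → β0 + β1 * x ^ (q - r2) ≤ f x - c0 * x ^ q)
    (hfup : ∀ x, 0 < x → f x - c0 * x ^ q ≤ α0 + α1 * x ^ (q - r1)) :
    ∃ a0 a1 b0 b1 : ℝ, 0 < a0 ∧ 0 < a1 ∧ b0 ≤ 0 ∧ b1 ≤ 0 ∧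
      ∀ t : ℝ, 0 < t →
        b0 + b1 * t ^ (q - min (r2 - 1) 0)
            ≤ (∫ y in Set.Icc (0 : ℝ) t, f (t - y) ∂U.measure)
                - c0 * (m * (q + 1))⁻¹ * t ^ (q + 1)
          ∧ (∫ y in Set.Icc (0 : ℝ) t, f (t - y) ∂U.measure)
                - c0 * (m * (q + 1))⁻¹ * t ^ (q + 1)
            ≤ a0 + a1 * t ^ (q - min (r1 - 1) 0) := by
  -- abbreviations
  set p1 := q - r1 with hp1def
  set p2 := q - r2 with hp2def
  have hp1 : 0 ≤ p1 := by rw [hp1def]; linarith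
  have hp2 : 0 ≤ p2 := by rw [hp2def]; linarith
  set P1 := q - min (r1 - 1) 0 with hP1def
  set P2 := q - min (r2 - 1) 0 with hP2def
  have hq_le_P1 : q ≤ P1 := by
    have := min_le_right (r1 - 1) (0:ℝ); rw [hP1def]; linarith
  have hp11_le_P1 : p1 + 1 ≤ P1 := by
    have := min_le_left (r1 - 1) (0:ℝ); rw [hP1def, hp1def]; linarith
  have h1_le_P1 : (1:ℝ) ≤ P1 := by linarith
  have hp1_le_P1 : p1 ≤ P1 := by linarith
  have hq_le_P2 : q ≤ P2 := by
    have := min_le_right (r2 - 1) (0:ℝ); rw [hP2def]; linarith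
  have hp21_le_P2 : p2 + 1 ≤ P2 := by
    have := min_le_left (r2 - 1) (0:ℝ); rw [hP2def, hp2def]; linarith
  have h1_le_P2 : (1:ℝ) ≤ P2 := by linarith
  have hp2_le_P2 : p2 ≤ P2 := by linarith
  -- constants
  refine ⟨α0 * a0star + (c0 * a0star + α0 * m⁻¹ + α1 * m⁻¹ + α1 * a0star),
    c0 * a0star + α0 * m⁻¹ + α1 * m⁻¹ + α1 * a0star,
    β0 * a0star + (β0 * m⁻¹ + β1 * m⁻¹ + β1 * a0star),
    β0 * m⁻¹ + β1 * m⁻¹ + β1 * a0star, by positivity, by positivity, ?_, ?_, ?_⟩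
  · have h1 : β0 * a0star ≤ 0 := mul_nonpos_of_nonpos_of_nonneg hβ0.le ha0star.le
    have h2 : β0 * m⁻¹ ≤ 0 := mul_nonpos_of_nonpos_of_nonneg hβ0.le (by positivity)
    have h3 : β1 * m⁻¹ ≤ 0 := mul_nonpos_of_nonpos_of_nonneg hβ1.le (by positivity)
    have h4 : β1 * a0star ≤ 0 := mul_nonpos_of_nonpos_of_nonneg hβ1.le ha0star.le
    linarith
  · have h2 : β0 * m⁻¹ ≤ 0 := mul_nonpos_of_nonpos_of_nonneg hβ0.le (by positivity)
    have h3 : β1 * m⁻¹ ≤ 0 := mul_nonpos_of_nonpos_of_nonneg hβ1.le (by positivity)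
    have h4 : β1 * a0star ≤ 0 := mul_nonpos_of_nonpos_of_nonneg hβ1.le ha0star.le
    linarith
  intro t ht
  set μ' := U.measure.restrict (Icc (0:ℝ) t) with hμ'
  have hfinμ' : IsFiniteMeasure μ' := by
    constructor
    rw [hμ', Measure.restrict_apply_univ, U.measure_Icc]
    exact ENNReal.ofReal_lt_top
  have hae : ∀ᵐ y ∂μ', y ∈ Icc (0:ℝ) t := ae_restrict_mem measurableSet_Icc
  -- extended f
  set g : ℝ → ℝ := fun x => if 0 ≤ x then f x else 0 with hgdef
  have hgmono : Monotone g := by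
    intro a b hab
    simp only [hgdef]
    split_ifs with h1 h2 h2
    · exact hfmono h1 h2 hab
    · exact absurd (h1.trans hab) h2
    · exact hfnonneg b h2
    · exact le_rfl
  have hgmeas : Measurable fun y : ℝ => g (t - y) :=
    hgmono.measurable.comp (measurable_const.sub measurable_id)
  have hgae : ∀ᵐ y ∂μ', f (t - y) = g (t - y) := by
    filter_upwards [hae] with y hy
    rw [hgdef]; simp only []
    rw [if_pos (by linarith [hy.2] : (0:ℝ) ≤ t - y)]
  have hgint : Integrable (fun y => g (t - y)) μ' := by
    apply (integrable_const (f t)).mono' hgmeas.aestronglyMeasurable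
    filter_upwards [hae] with y hy
    have h0 : (0:ℝ) ≤ t - y := by linarith [hy.2]
    rw [Real.norm_eq_abs, hgdef]
    simp only [if_pos h0]
    rw [abs_of_nonneg (hfnonneg _ h0)]
    exact hfmono h0 ht.le (by linarith [hy.1])
  -- integrability of kernels
  have hiq : Integrable (fun y => (t - y) ^ q) μ' := integrable_pow_kernel U q t hq.le ht
  have hi1 : Integrable (fun y => (t - y) ^ p1) μ' := integrable_pow_kernel U p1 t hp1 ht
  have hi2 : Integrable (fun y => (t - y) ^ p2) μ' := integrable_pow_kernel U p2 t hp2 ht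
  set Iq := ∫ y in Icc (0:ℝ) t, (t - y) ^ q ∂U.measure with hIq
  set I1 := ∫ y in Icc (0:ℝ) t, (t - y) ^ p1 ∂U.measure with hI1
  set I2 := ∫ y in Icc (0:ℝ) t, (t - y) ^ p2 ∂U.measure with hI2
  set V := ∫ y in Icc (0:ℝ) t, f (t - y) ∂U.measure with hV
  have hVg : V = ∫ y in Icc (0:ℝ) t, g (t - y) ∂U.measure := integral_congr_ae hgae
  have hM : (μ' univ).toReal = U t := by
    rw [hμ', Measure.restrict_apply_univ, U.measure_Icc, leftLim_U_zero U hU0, sub_zero,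
      ENNReal.toReal_ofReal]
    have := (hUbound t ht.le).1
    nlinarith [inv_pos.2 hm]
  -- upper pointwise bound and integral bound
  have hupintA : Integrable (fun y => c0 * (t - y) ^ q + α0) μ' :=
    (hiq.const_mul c0).add (integrable_const α0)
  have hupint : Integrable (fun y => c0 * (t - y) ^ q + α0 + α1 * (t - y) ^ p1) μ' :=
    hupintA.add (hi1.const_mul α1)
  have hVle : V ≤ c0 * Iq + α0 * U t + α1 * I1 := by
    rw [hVg]
    calc ∫ y in Icc (0:ℝ) t, g (t - y) ∂U.measure
        ≤ ∫ y in Icc (0:ℝ) t, (c0 * (t - y) ^ q + α0 + α1 * (t - y) ^ p1) ∂U.measure := by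
          apply integral_mono_ae hgint hupint
          filter_upwards [hae] with y hy
          have h0 : (0:ℝ) ≤ t - y := by linarith [hy.2]
          rw [hgdef]
          simp only [if_pos h0]
          rcases eq_or_lt_of_le h0 with h0' | h0'
          · rw [← h0', hf0]
            have h1 : (0:ℝ) ^ q = 0 := Real.zero_rpow hq.ne'
            have h2 : 0 ≤ (0:ℝ) ^ p1 := Real.rpow_nonneg le_rfl p1
            nlinarith
          · have := hfup (t - y) h0'
            linarith
      _ = c0 * Iq + α0 * U t + α1 * I1 := by
          rw [integral_add hupintA (hi1.const_mul α1),
            integral_add (hiq.const_mul c0) (integrable_const α0),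
            integral_const_mul, integral_const_mul, integral_const, measureReal_def, hM, smul_eq_mul, mul_comm (U t) α0]
  -- lower pointwise bound and integral bound
  have hlowintA : Integrable (fun y => c0 * (t - y) ^ q + β0) μ' :=
    (hiq.const_mul c0).add (integrable_const β0)
  have hlowint : Integrable (fun y => c0 * (t - y) ^ q + β0 + β1 * (t - y) ^ p2) μ' :=
    hlowintA.add (hi2.const_mul β1)
  have hVge : c0 * Iq + β0 * U t + β1 * I2 ≤ V := by
    rw [hVg]
    calc c0 * Iq + β0 * U t + β1 * I2
        = ∫ y in Icc (0:ℝ) t, (c0 * (t - y) ^ q + β0 + β1 * (t - y) ^ p2) ∂U.measure := by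
          rw [integral_add hlowintA (hi2.const_mul β1),
            integral_add (hiq.const_mul c0) (integrable_const β0),
            integral_const_mul, integral_const_mul, integral_const, measureReal_def, hM, smul_eq_mul, mul_comm (U t) β0]
      _ ≤ ∫ y in Icc (0:ℝ) t, g (t - y) ∂U.measure := by
          apply integral_mono_ae hlowint hgint
          filter_upwards [hae] with y hy
          have h0 : (0:ℝ) ≤ t - y := by linarith [hy.2]
          rw [hgdef]
          simp only [if_pos h0]
          rcases eq_or_lt_of_le h0 with h0' | h0'
          · rw [← h0', hf0]
            have h1 : (0:ℝ) ^ q = 0 := Real.zero_rpow hq.ne'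
            have h2 : 0 ≤ (0:ℝ) ^ p2 := Real.rpow_nonneg le_rfl p2
            nlinarith
          · have := hflow (t - y) h0'
            linarith
  -- core bounds
  obtain ⟨hIq_lo, hIq_up⟩ := core_bounds m a0star hm ha0star U hU0 hUbound q t hq.le ht
  obtain ⟨hI1_lo, hI1_up⟩ := core_bounds m a0star hm ha0star U hU0 hUbound p1 t hp1 ht
  obtain ⟨hI2_lo, hI2_up⟩ := core_bounds m a0star hm ha0star U hU0 hUbound p2 t hp2 ht
  rw [← hIq] at hIq_lo hIq_up
  rw [← hI1] at hI1_lo hI1_up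
  rw [← hI2] at hI2_lo hI2_up
  have hUt_up : U t ≤ m⁻¹ * t + a0star := by linarith [(hUbound t ht.le).2]
  have heq : c0 * (m * (q + 1))⁻¹ * t ^ (q + 1) = c0 * (m⁻¹ * (t ^ (q+1) / (q+1))) := by
    rw [mul_inv]; ring
  have hA1 : t ^ (p1+1) / (p1+1) ≤ t ^ (p1+1) :=
    div_le_self (Real.rpow_nonneg ht.le _) (by linarith)
  have hA2 : t ^ (p2+1) / (p2+1) ≤ t ^ (p2+1) :=
    div_le_self (Real.rpow_nonneg ht.le _) (by linarith)
  have ht1 : t ^ (1:ℝ) = t := Real.rpow_one t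
  constructor
  · -- lower bound
    rw [heq]
    have e2 : β0 * m⁻¹ + β0 * m⁻¹ * t ^ P2 ≤ β0 * m⁻¹ * t ^ (1:ℝ) :=
      pow_ge_aux _ 1 P2 t (mul_nonpos_of_nonpos_of_nonneg hβ0.le (by positivity)) zero_le_one h1_le_P2 ht
    have e3 : β1 * m⁻¹ + β1 * m⁻¹ * t ^ P2 ≤ β1 * m⁻¹ * t ^ (p2+1) :=
      pow_ge_aux _ (p2+1) P2 t (mul_nonpos_of_nonpos_of_nonneg hβ1.le (by positivity)) (by linarith) hp21_le_P2 ht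
    have e4 : β1 * a0star + β1 * a0star * t ^ P2 ≤ β1 * a0star * t ^ p2 :=
      pow_ge_aux _ p2 P2 t (mul_nonpos_of_nonpos_of_nonneg hβ1.le ha0star.le) hp2 hp2_le_P2 ht
    have m1 : c0 * (m⁻¹ * (t ^ (q+1) / (q+1))) ≤ c0 * Iq := mul_le_mul_of_nonneg_left hIq_lo hc0.le
    have m2 : β0 * (m⁻¹ * t + a0star) ≤ β0 * U t := mul_le_mul_of_nonpos_left hUt_up hβ0.le
    have m3 : β1 * (m⁻¹ * (t ^ (p2+1) / (p2+1)) + a0star * t ^ p2) ≤ β1 * I2 :=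
      mul_le_mul_of_nonpos_left hI2_up hβ1.le
    have m4 : β1 * (m⁻¹ * t ^ (p2+1)) ≤ β1 * (m⁻¹ * (t ^ (p2+1) / (p2+1))) := by
      apply mul_le_mul_of_nonpos_left _ hβ1.le
      exact mul_le_mul_of_nonneg_left hA2 (by positivity)
    rw [ht1] at e2
    linarith [m3, m4, e3, e4, m1, m2, hVge]
  · -- upper bound
    rw [heq]
    have e1 : c0 * a0star * t ^ q ≤ c0 * a0star + c0 * a0star * t ^ P1 :=
      pow_le_aux _ q P1 t (by positivity) hq.le hq_le_P1 ht
    have e2 : α0 * m⁻¹ * t ^ (1:ℝ) ≤ α0 * m⁻¹ + α0 * m⁻¹ * t ^ P1 :=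
      pow_le_aux _ 1 P1 t (by positivity) zero_le_one h1_le_P1 ht
    have e3 : α1 * m⁻¹ * t ^ (p1+1) ≤ α1 * m⁻¹ + α1 * m⁻¹ * t ^ P1 :=
      pow_le_aux _ (p1+1) P1 t (by positivity) (by linarith) hp11_le_P1 ht
    have e4 : α1 * a0star * t ^ p1 ≤ α1 * a0star + α1 * a0star * t ^ P1 :=
      pow_le_aux _ p1 P1 t (by positivity) hp1 hp1_le_P1 ht
    have m1 : c0 * Iq ≤ c0 * (m⁻¹ * (t ^ (q+1) / (q+1)) + a0star * t ^ q) :=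
      mul_le_mul_of_nonneg_left hIq_up hc0.le
    have m2 : α0 * U t ≤ α0 * (m⁻¹ * t + a0star) := mul_le_mul_of_nonneg_left hUt_up hα0.le
    have m3 : α1 * I1 ≤ α1 * (m⁻¹ * (t ^ (p1+1) / (p1+1)) + a0star * t ^ p1) :=
      mul_le_mul_of_nonneg_left hI1_up hα1.le
    have m4 : α1 * (m⁻¹ * (t ^ (p1+1) / (p1+1))) ≤ α1 * (m⁻¹ * t ^ (p1+1)) := by
      apply mul_le_mul_of_nonneg_left _ hα1.le
      exact mul_le_mul_of_nonneg_left hA1 (by positivity)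
    rw [ht1] at e2
    linarith [m3, m4, e1, e2, e3, e4, m1, m2, hVle]
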